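/- The comultiplication of the modular automorphism of the right integral is given by Δ(σ'(a)) = (σ' ⊗ S⁻²)(Δ(a)), i.e. Δ(σ'(a)) = Σ σ'(a₍₁₎) ⊗ S⁻²(a₍₂₎), for every a ∈ A. -/

import Mathlib

open TensorProduct HopfAlgebra

namespace ModularAuxProof

open Coalgebra
open scoped Coalgebra

local notation "𝑺" => HopfAlgebra.antipode (R := ℂ)

variable {A : Type*} [Ring A] [HopfAlgebra ℂ A]

lemma sum_counit_smul_left {c : A} {ι : Type*} (r : Coalgebra.Repr ℂ c ι) :
    ∑ i ∈ r.index, counit (R := ℂ) (r.right i) • r.left i = c := by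
  have h := congrArg (TensorProduct.rid ℂ A) (Coalgebra.sum_tmul_counit_eq r)
  simp only [map_sum, TensorProduct.rid_tmul] at h
  simpa using h

lemma sum_counit_smul_right {c : A} {ι : Type*} (r : Coalgebra.Repr ℂ c ι) :
    ∑ i ∈ r.index, counit (R := ℂ) (r.left i) • r.right i = c := by
  have h := congrArg (TensorProduct.lid ℂ A) (Coalgebra.sum_counit_tmul_eq r)
  simp only [map_sum, TensorProduct.lid_tmul] at h
  simpa using h

/-- a `Repr` of a product, from `Repr`s of the factors -/
noncomputable def mulRepr {p q : A} {ι κ : Type*} (rp : Coalgebra.Repr ℂ p ι) (rq : Coalgebra.Repr ℂ q κ) :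
    Coalgebra.Repr ℂ (p * q) (ι × κ) where
  index := rp.index ×ˢ rq.index
  left := fun ij => rp.left ij.1 * rq.left ij.2
  right := fun ij => rp.right ij.1 * rq.right ij.2
  eq := by
    rw [Finset.sum_product]
    rw [Bialgebra.comul_mul, ← rp.eq, ← rq.eq, Finset.sum_mul_sum]
    simp [Algebra.TensorProduct.tmul_mul_tmul]

lemma sum_antipode_mul_prod {p q : A} {ι κ : Type*} (rp : Coalgebra.Repr ℂ p ι) (rq : Coalgebra.Repr ℂ q κ) :
    ∑ k ∈ rp.index, ∑ j ∈ rq.index,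
      𝑺 (rp.left k * rq.left j) * (rp.right k * rq.right j) =
      (counit (R := ℂ) p * counit (R := ℂ) q) • (1 : A) := by
  have h := HopfAlgebra.sum_antipode_mul_eq_smul (mulRepr rp rq)
  simp only [mulRepr] at h
  rw [Finset.sum_product] at h
  simpa [Bialgebra.counit_mul] using h

/-- coassociativity transport through an arbitrary linear map -/
lemma transport {M : Type*} [AddCommMonoid M] [Module ℂ M]
    (L : A ⊗[ℂ] (A ⊗[ℂ] A) →ₗ[ℂ] M)
    {c : A} {ι κ Λ : Type*} (rc : Coalgebra.Repr ℂ c ι)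
    (rcl : ∀ k, Coalgebra.Repr ℂ (rc.left k) κ)
    (rcr : ∀ k, Coalgebra.Repr ℂ (rc.right k) Λ) :
    ∑ k ∈ rc.index, ∑ l ∈ (rcl k).index,
        L ((rcl k).left l ⊗ₜ[ℂ] ((rcl k).right l ⊗ₜ[ℂ] rc.right k))
      = ∑ k ∈ rc.index, ∑ l ∈ (rcr k).index,
        L (rc.left k ⊗ₜ[ℂ] ((rcr k).left l ⊗ₜ[ℂ] (rcr k).right l)) := by
  have h := congrArg L (Coalgebra.sum_tmul_tmul_eq rc rcl rcr)
  simpa [map_sum] using h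

lemma antipodeMul (a b : A) : 𝑺 (a * b) = 𝑺 b * 𝑺 a := by
  classical
  set ra := ℛ ℂ a with hra
  set rb := ℛ ℂ b with hrb
  set ral : ∀ k, Coalgebra.Repr ℂ (ra.left k) (A × A) := fun k => ℛ ℂ (ra.left k) with hral
  set rar : ∀ k, Coalgebra.Repr ℂ (ra.right k) (A × A) := fun k => ℛ ℂ (ra.right k) with hrar
  set rbl : ∀ i, Coalgebra.Repr ℂ (rb.left i) (A × A) := fun i => ℛ ℂ (rb.left i) with hrbl
  set rbr : ∀ i, Coalgebra.Repr ℂ (rb.right i) (A × A) := fun i => ℛ ℂ (rb.right i) with hrbr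
  -- the summand
  set F : (i : A × A) → A × A → (k : A × A) → A × A → A :=
    fun i j k l => 𝑺 (ra.left k * rb.left i) *
      ((rar k).left l * ((rbr i).left j * (𝑺 ((rbr i).right j) * 𝑺 ((rar k).right l)))) with hF
  -- evaluation 1 : the big sum equals 𝑺 (a*b)
  have eval1 : ∑ i ∈ rb.index, ∑ j ∈ (rbr i).index, ∑ k ∈ ra.index, ∑ l ∈ (rar k).index,
      F i j k l = 𝑺 (a * b) := by
    -- reorder to i,k,l,j
    rw [show ∑ i ∈ rb.index, ∑ j ∈ (rbr i).index, ∑ k ∈ ra.index, ∑ l ∈ (rar k).index, F i j k l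
        = ∑ i ∈ rb.index, ∑ k ∈ ra.index, ∑ l ∈ (rar k).index, ∑ j ∈ (rbr i).index, F i j k l by
      refine Finset.sum_congr rfl fun i _ => ?_
      rw [Finset.sum_comm]
      exact Finset.sum_congr rfl fun k _ => Finset.sum_comm]
    have collapse_j : ∀ i k l, ∑ j ∈ (rbr i).index, F i j k l
        = counit (R := ℂ) (rb.right i) • (𝑺 (ra.left k * rb.left i) *
            ((rar k).left l * 𝑺 ((rar k).right l))) := by
      intro i k l
      have h := HopfAlgebra.sum_mul_antipode_eq_smul (rbr i)
      calc ∑ j ∈ (rbr i).index, F i j k l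
          = 𝑺 (ra.left k * rb.left i) * ((rar k).left l *
              ((∑ j ∈ (rbr i).index, (rbr i).left j * 𝑺 ((rbr i).right j)) * 𝑺 ((rar k).right l))) := by
            simp only [hF, Finset.mul_sum, Finset.sum_mul, mul_assoc]
        _ = _ := by rw [h]; simp [smul_mul_assoc, mul_smul_comm]
    simp only [collapse_j]
    have collapse_l : ∀ i k, ∑ l ∈ (rar k).index,
        counit (R := ℂ) (rb.right i) • (𝑺 (ra.left k * rb.left i) *
          ((rar k).left l * 𝑺 ((rar k).right l)))
        = counit (R := ℂ) (rb.right i) • (counit (R := ℂ) (ra.right k) •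
            𝑺 (ra.left k * rb.left i)) := by
      intro i k
      rw [← Finset.smul_sum, ← Finset.mul_sum, HopfAlgebra.sum_mul_antipode_eq_smul (rar k)]
      simp [mul_smul_comm]
    simp only [collapse_l]
    have expand : a * b = ∑ i ∈ rb.index, ∑ k ∈ ra.index, counit (R := ℂ) (rb.right i) •
        (counit (R := ℂ) (ra.right k) • (ra.left k * rb.left i)) := by
      conv_lhs => rw [← sum_counit_smul_left ra, ← sum_counit_smul_left rb]
      rw [Finset.sum_mul_sum]
      rw [Finset.sum_comm]
      refine Finset.sum_congr rfl fun i _ => Finset.sum_congr rfl fun k _ => ?_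
      simp [smul_mul_assoc, mul_smul_comm, smul_smul, mul_comm]
    rw [expand]
    simp only [map_sum, map_smul]
  -- transport 1 : switch the a-splitting, for fixed (i,j)
  have tr1 : ∀ (i : A × A) (j : A × A),
      ∑ k ∈ ra.index, ∑ l ∈ (rar k).index, F i j k l
      = ∑ k ∈ ra.index, ∑ l ∈ (ral k).index,
          𝑺 ((ral k).left l * rb.left i) * ((ral k).right l *
            ((rbr i).left j * (𝑺 ((rbr i).right j) * 𝑺 (ra.right k)))) := by
    intro i j
    set L : A ⊗[ℂ] (A ⊗[ℂ] A) →ₗ[ℂ] A :=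
      (LinearMap.mul' ℂ A) ∘ₗ
        TensorProduct.map ((HopfAlgebra.antipode (R := ℂ)) ∘ₗ LinearMap.mulRight ℂ (rb.left i))
          ((LinearMap.mul' ℂ A) ∘ₗ LinearMap.lTensor A
            ((LinearMap.mulLeft ℂ ((rbr i).left j * 𝑺 ((rbr i).right j))) ∘ₗ
              (HopfAlgebra.antipode (R := ℂ)))) with hL
    have hLt : ∀ x y z : A, L (x ⊗ₜ[ℂ] (y ⊗ₜ[ℂ] z)) =
        𝑺 (x * rb.left i) * (y * ((rbr i).left j * (𝑺 ((rbr i).right j) * 𝑺 z))) := by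
      intro x y z
      simp only [hL, LinearMap.comp_apply, TensorProduct.map_tmul, LinearMap.lTensor_tmul,
        LinearMap.mul'_apply, LinearMap.mulRight_apply, LinearMap.mulLeft_apply, mul_assoc]
    have h := transport L ra ral rar
    simp only [hLt] at h
    rw [← h]
  -- transport 2 : switch the b-splitting, for fixed (k,l)
  have tr2 : ∀ (k : A × A) (l : A × A),
      ∑ i ∈ rb.index, ∑ j ∈ (rbr i).index,
        𝑺 ((ral k).left l * rb.left i) * ((ral k).right l *
          ((rbr i).left j * (𝑺 ((rbr i).right j) * 𝑺 (ra.right k))))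
      = ∑ i ∈ rb.index, ∑ j ∈ (rbl i).index,
        𝑺 ((ral k).left l * (rbl i).left j) * ((ral k).right l *
          ((rbl i).right j * (𝑺 (rb.right i) * 𝑺 (ra.right k)))) := by
    intro k l
    set L : A ⊗[ℂ] (A ⊗[ℂ] A) →ₗ[ℂ] A :=
      (LinearMap.mul' ℂ A) ∘ₗ
        TensorProduct.map ((HopfAlgebra.antipode (R := ℂ)) ∘ₗ LinearMap.mulLeft ℂ ((ral k).left l))
          ((LinearMap.mulLeft ℂ ((ral k).right l)) ∘ₗ (LinearMap.mul' ℂ A) ∘ₗ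
            LinearMap.lTensor A
              ((LinearMap.mulRight ℂ (𝑺 (ra.right k))) ∘ₗ (HopfAlgebra.antipode (R := ℂ)))) with hL
    have hLt : ∀ x y z : A, L (x ⊗ₜ[ℂ] (y ⊗ₜ[ℂ] z)) =
        𝑺 ((ral k).left l * x) * ((ral k).right l * (y * (𝑺 z * 𝑺 (ra.right k)))) := by
      intro x y z
      simp only [hL, LinearMap.comp_apply, TensorProduct.map_tmul, LinearMap.lTensor_tmul,
        LinearMap.mul'_apply, LinearMap.mulRight_apply, LinearMap.mulLeft_apply, mul_assoc]
    have h := transport L rb rbl rbr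
    simp only [hLt] at h
    rw [← h]
  -- evaluation 2 : the transported sum equals 𝑺 b * 𝑺 a
  have eval2 : ∑ k ∈ ra.index, ∑ l ∈ (ral k).index, ∑ i ∈ rb.index, ∑ j ∈ (rbl i).index,
      𝑺 ((ral k).left l * (rbl i).left j) * ((ral k).right l *
        ((rbl i).right j * (𝑺 (rb.right i) * 𝑺 (ra.right k))))
      = 𝑺 b * 𝑺 a := by
    -- reorder to k,i,l,j
    rw [show (∑ k ∈ ra.index, ∑ l ∈ (ral k).index, ∑ i ∈ rb.index, ∑ j ∈ (rbl i).index,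
        𝑺 ((ral k).left l * (rbl i).left j) * ((ral k).right l *
          ((rbl i).right j * (𝑺 (rb.right i) * 𝑺 (ra.right k)))))
        = ∑ k ∈ ra.index, ∑ i ∈ rb.index, ∑ l ∈ (ral k).index, ∑ j ∈ (rbl i).index,
        𝑺 ((ral k).left l * (rbl i).left j) * ((ral k).right l *
          ((rbl i).right j * (𝑺 (rb.right i) * 𝑺 (ra.right k)))) from
      Finset.sum_congr rfl fun k _ => Finset.sum_comm]
    have collapse : ∀ k i, ∑ l ∈ (ral k).index, ∑ j ∈ (rbl i).index,
        𝑺 ((ral k).left l * (rbl i).left j) * ((ral k).right l *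
          ((rbl i).right j * (𝑺 (rb.right i) * 𝑺 (ra.right k))))
        = (counit (R := ℂ) (ra.left k) * counit (R := ℂ) (rb.left i)) •
            (𝑺 (rb.right i) * 𝑺 (ra.right k)) := by
      intro k i
      have h := sum_antipode_mul_prod (ral k) (rbl i)
      calc ∑ l ∈ (ral k).index, ∑ j ∈ (rbl i).index,
          𝑺 ((ral k).left l * (rbl i).left j) * ((ral k).right l *
            ((rbl i).right j * (𝑺 (rb.right i) * 𝑺 (ra.right k))))
          = (∑ l ∈ (ral k).index, ∑ j ∈ (rbl i).index,
              𝑺 ((ral k).left l * (rbl i).left j) * ((ral k).right l * (rbl i).right j)) *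
              (𝑺 (rb.right i) * 𝑺 (ra.right k)) := by
            rw [Finset.sum_mul]
            refine Finset.sum_congr rfl fun l _ => ?_
            rw [Finset.sum_mul]
            exact Finset.sum_congr rfl fun j _ => by rw [mul_assoc, mul_assoc]
        _ = _ := by rw [h]; simp [smul_mul_assoc]
    simp only [collapse]
    have hb : ∑ i ∈ rb.index, counit (R := ℂ) (rb.left i) • 𝑺 (rb.right i) = 𝑺 b := by
      conv_rhs => rw [← sum_counit_smul_right rb]
      rw [map_sum]
      exact Finset.sum_congr rfl fun i _ => (map_smul _ _ _).symm
    have ha : ∑ k ∈ ra.index, counit (R := ℂ) (ra.left k) • 𝑺 (ra.right k) = 𝑺 a := by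
      conv_rhs => rw [← sum_counit_smul_right ra]
      rw [map_sum]
      exact Finset.sum_congr rfl fun k _ => (map_smul _ _ _).symm
    calc ∑ k ∈ ra.index, ∑ i ∈ rb.index,
        (counit (R := ℂ) (ra.left k) * counit (R := ℂ) (rb.left i)) •
          (𝑺 (rb.right i) * 𝑺 (ra.right k))
        = ∑ k ∈ ra.index, (counit (R := ℂ) (ra.left k)) •
            ((∑ i ∈ rb.index, counit (R := ℂ) (rb.left i) • 𝑺 (rb.right i)) * 𝑺 (ra.right k)) := by
          refine Finset.sum_congr rfl fun k _ => ?_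
          rw [Finset.sum_mul, Finset.smul_sum]
          refine Finset.sum_congr rfl fun i _ => ?_
          rw [mul_smul, smul_mul_assoc]
      _ = ∑ k ∈ ra.index, counit (R := ℂ) (ra.left k) • (𝑺 b * 𝑺 (ra.right k)) := by rw [hb]
      _ = 𝑺 b * ∑ k ∈ ra.index, counit (R := ℂ) (ra.left k) • 𝑺 (ra.right k) := by
          rw [Finset.mul_sum]
          exact Finset.sum_congr rfl fun k _ => by rw [mul_smul_comm]
      _ = 𝑺 b * 𝑺 a := by rw [ha]
  -- assemble
  rw [← eval1]
  rw [show (∑ i ∈ rb.index, ∑ j ∈ (rbr i).index, ∑ k ∈ ra.index, ∑ l ∈ (rar k).index, F i j k l)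
      = ∑ i ∈ rb.index, ∑ j ∈ (rbr i).index, ∑ k ∈ ra.index, ∑ l ∈ (ral k).index,
          𝑺 ((ral k).left l * rb.left i) * ((ral k).right l *
            ((rbr i).left j * (𝑺 ((rbr i).right j) * 𝑺 (ra.right k)))) from
    Finset.sum_congr rfl fun i _ => Finset.sum_congr rfl fun j _ => tr1 i j]
  -- reorder (i,j,k,l) → (k,l,i,j)
  rw [show (∑ i ∈ rb.index, ∑ j ∈ (rbr i).index, ∑ k ∈ ra.index, ∑ l ∈ (ral k).index,
        𝑺 ((ral k).left l * rb.left i) * ((ral k).right l *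
          ((rbr i).left j * (𝑺 ((rbr i).right j) * 𝑺 (ra.right k)))))
      = ∑ k ∈ ra.index, ∑ l ∈ (ral k).index, ∑ i ∈ rb.index, ∑ j ∈ (rbr i).index,
        𝑺 ((ral k).left l * rb.left i) * ((ral k).right l *
          ((rbr i).left j * (𝑺 ((rbr i).right j) * 𝑺 (ra.right k)))) by
    rw [show (∑ i ∈ rb.index, ∑ j ∈ (rbr i).index, ∑ k ∈ ra.index, ∑ l ∈ (ral k).index,
        𝑺 ((ral k).left l * rb.left i) * ((ral k).right l *
          ((rbr i).left j * (𝑺 ((rbr i).right j) * 𝑺 (ra.right k)))))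
        = ∑ i ∈ rb.index, ∑ k ∈ ra.index, ∑ l ∈ (ral k).index, ∑ j ∈ (rbr i).index,
        𝑺 ((ral k).left l * rb.left i) * ((ral k).right l *
          ((rbr i).left j * (𝑺 ((rbr i).right j) * 𝑺 (ra.right k)))) from
      Finset.sum_congr rfl fun i _ => by
        rw [Finset.sum_comm]
        exact Finset.sum_congr rfl fun k _ => Finset.sum_comm]
    rw [Finset.sum_comm]
    exact Finset.sum_congr rfl fun k _ => Finset.sum_comm]
  rw [show (∑ k ∈ ra.index, ∑ l ∈ (ral k).index, ∑ i ∈ rb.index, ∑ j ∈ (rbr i).index,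
        𝑺 ((ral k).left l * rb.left i) * ((ral k).right l *
          ((rbr i).left j * (𝑺 ((rbr i).right j) * 𝑺 (ra.right k)))))
      = ∑ k ∈ ra.index, ∑ l ∈ (ral k).index, ∑ i ∈ rb.index, ∑ j ∈ (rbl i).index,
        𝑺 ((ral k).left l * (rbl i).left j) * ((ral k).right l *
          ((rbl i).right j * (𝑺 (rb.right i) * 𝑺 (ra.right k)))) from
    Finset.sum_congr rfl fun k _ => Finset.sum_congr rfl fun l _ => tr2 k l]
  exact eval2

noncomputable def Gam (φ : A →ₗ[ℂ] ℂ) : A ⊗[ℂ] A →ₗ[ℂ] A :=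
  (TensorProduct.lid ℂ A).toLinearMap ∘ₗ
    LinearMap.rTensor A (φ ∘ₗ (HopfAlgebra.antipode (R := ℂ)))

@[simp] lemma Gam_tmul (φ : A →ₗ[ℂ] ℂ) (u v : A) :
    Gam φ (u ⊗ₜ[ℂ] v) = φ (𝑺 u) • v := by
  simp [Gam]

variable (φ : A →ₗ[ℂ] ℂ)

lemma Gam_comul
    (hψR : ∀ a : A, (TensorProduct.lid ℂ A) (LinearMap.rTensor A (φ ∘ₗ antipode (R := ℂ))
        (Coalgebra.comul a)) = φ (antipode (R := ℂ) a) • (1 : A)) (c : A) :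
    Gam φ (comul (R := ℂ) c) = φ (𝑺 c) • (1 : A) := by
  simpa [Gam] using hψR c

lemma Gam_mul_right (w : A ⊗[ℂ] A) (v : A) :
    Gam φ (w * ((1 : A) ⊗ₜ[ℂ] v)) = Gam φ w * v := by
  induction w using TensorProduct.induction_on with
  | zero => simp
  | tmul x y => simp [Algebra.TensorProduct.tmul_mul_tmul, smul_mul_assoc]
  | add u v' hu hv => simp [add_mul, hu, hv]

lemma S_Gam (w : A ⊗[ℂ] A) :
    𝑺 (Gam φ w) = Gam φ (LinearMap.lTensor A (HopfAlgebra.antipode (R := ℂ)) w) := by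
  induction w using TensorProduct.induction_on with
  | zero => simp
  | tmul x y => simp
  | add u v hu hv => simp [hu, hv]

lemma mul_lTensor (x : A) (g : A →ₗ[ℂ] A) (w : A ⊗[ℂ] A) :
    (x ⊗ₜ[ℂ] (1 : A)) * LinearMap.lTensor A g w
      = LinearMap.lTensor A g ((x ⊗ₜ[ℂ] (1 : A)) * w) := by
  induction w using TensorProduct.induction_on with
  | zero => simp
  | tmul u v => simp [Algebra.TensorProduct.tmul_mul_tmul]
  | add u v hu hv => simp [mul_add, hu, hv]

/-- strong right invariance for the right integral `φ ∘ S` -/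
lemma two'
    (hψR : ∀ a : A, (TensorProduct.lid ℂ A) (LinearMap.rTensor A (φ ∘ₗ antipode (R := ℂ))
        (Coalgebra.comul a)) = φ (antipode (R := ℂ) a) • (1 : A)) (a b : A) :
    Gam φ (LinearMap.lTensor A (HopfAlgebra.antipode (R := ℂ))
        ((a ⊗ₜ[ℂ] (1 : A)) * comul (R := ℂ) b))
      = Gam φ (comul (R := ℂ) a * (b ⊗ₜ[ℂ] (1 : A))) := by
  classical
  set rb := ℛ ℂ b with hrb
  set rbl : ∀ i, Coalgebra.Repr ℂ (rb.left i) (A × A) := fun i => ℛ ℂ (rb.left i) with hrbl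
  set rbr : ∀ i, Coalgebra.Repr ℂ (rb.right i) (A × A) := fun i => ℛ ℂ (rb.right i) with hrbr
  have stepA : (b ⊗ₜ[ℂ] (1 : A)) = ∑ i ∈ rb.index, ∑ j ∈ (rbl i).index,
      (rbl i).left j ⊗ₜ[ℂ] ((rbl i).right j * 𝑺 (rb.right i)) := by
    set L : A ⊗[ℂ] (A ⊗[ℂ] A) →ₗ[ℂ] A ⊗[ℂ] A :=
      LinearMap.lTensor A ((LinearMap.mul' ℂ A) ∘ₗ
        LinearMap.lTensor A (HopfAlgebra.antipode (R := ℂ))) with hL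
    have hLt : ∀ x y z : A, L (x ⊗ₜ[ℂ] (y ⊗ₜ[ℂ] z)) = x ⊗ₜ[ℂ] (y * 𝑺 z) := by
      intro x y z; simp [hL]
    have h := transport L rb rbl rbr
    simp only [hLt] at h
    rw [h]
    have e1 : ∀ i, ∑ j ∈ (rbr i).index,
        rb.left i ⊗ₜ[ℂ] ((rbr i).left j * 𝑺 ((rbr i).right j))
        = (counit (R := ℂ) (rb.right i) • rb.left i) ⊗ₜ[ℂ] (1 : A) := by
      intro i
      rw [← TensorProduct.tmul_sum, HopfAlgebra.sum_mul_antipode_eq_smul (rbr i),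
        TensorProduct.tmul_smul, TensorProduct.smul_tmul']
    rw [show (∑ i ∈ rb.index, ∑ j ∈ (rbr i).index,
        rb.left i ⊗ₜ[ℂ] ((rbr i).left j * 𝑺 ((rbr i).right j)))
        = ∑ i ∈ rb.index, (counit (R := ℂ) (rb.right i) • rb.left i) ⊗ₜ[ℂ] (1 : A) from
      Finset.sum_congr rfl fun i _ => e1 i]
    rw [← TensorProduct.sum_tmul, sum_counit_smul_left rb]
  have stepC : (a ⊗ₜ[ℂ] (1 : A)) * comul (R := ℂ) b
      = ∑ i ∈ rb.index, (a * rb.left i) ⊗ₜ[ℂ] rb.right i := by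
    rw [← rb.eq, Finset.mul_sum]
    exact Finset.sum_congr rfl fun i _ => by
      simp [Algebra.TensorProduct.tmul_mul_tmul]
  have lhs_eq : Gam φ (LinearMap.lTensor A (HopfAlgebra.antipode (R := ℂ))
      ((a ⊗ₜ[ℂ] (1 : A)) * comul (R := ℂ) b))
      = ∑ i ∈ rb.index, φ (𝑺 (a * rb.left i)) • 𝑺 (rb.right i) := by
    rw [stepC, map_sum, map_sum]
    exact Finset.sum_congr rfl fun i _ => by simp
  rw [lhs_eq, stepA, Finset.mul_sum, map_sum]
  refine Finset.sum_congr rfl fun i _ => ?_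
  rw [Finset.mul_sum, map_sum]
  have e2 : ∀ j ∈ (rbl i).index, Gam φ (comul (R := ℂ) a *
      ((rbl i).left j ⊗ₜ[ℂ] ((rbl i).right j * 𝑺 (rb.right i))))
      = Gam φ (comul (R := ℂ) a * ((rbl i).left j ⊗ₜ[ℂ] (rbl i).right j)) * 𝑺 (rb.right i) := by
    intro j _
    have : ((rbl i).left j ⊗ₜ[ℂ] ((rbl i).right j * 𝑺 (rb.right i)))
        = ((rbl i).left j ⊗ₜ[ℂ] (rbl i).right j) * ((1 : A) ⊗ₜ[ℂ] 𝑺 (rb.right i)) := by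
      simp [Algebra.TensorProduct.tmul_mul_tmul]
    rw [this, ← mul_assoc, Gam_mul_right]
  rw [Finset.sum_congr rfl e2, ← Finset.sum_mul, ← map_sum, ← Finset.mul_sum, (rbl i).eq,
    ← Bialgebra.comul_mul, Gam_comul φ hψR, smul_mul_assoc, one_mul]

/-- apply `S` to strong right invariance -/
lemma three
    (hψR : ∀ a : A, (TensorProduct.lid ℂ A) (LinearMap.rTensor A (φ ∘ₗ antipode (R := ℂ))
        (Coalgebra.comul a)) = φ (antipode (R := ℂ) a) • (1 : A)) (a b : A) :
    Gam φ (LinearMap.lTensor A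
        ((HopfAlgebra.antipode (R := ℂ)) ∘ₗ (HopfAlgebra.antipode (R := ℂ)))
        ((a ⊗ₜ[ℂ] (1 : A)) * comul (R := ℂ) b))
      = Gam φ (LinearMap.lTensor A (HopfAlgebra.antipode (R := ℂ))
        (comul (R := ℂ) a * (b ⊗ₜ[ℂ] (1 : A)))) := by
  have h := congrArg (fun t => 𝑺 t) (two' φ hψR a b)
  simp only [S_Gam] at h
  rwa [← LinearMap.lTensor_comp_apply] at h

variable (σ' : A ≃ₐ[ℂ] A)

lemma sig1
    (hσ' : ∀ a b : A, φ (antipode (R := ℂ) (a * b)) = φ (antipode (R := ℂ) (b * σ' a)))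
    (c : A) (w : A ⊗[ℂ] A) :
    Gam φ (LinearMap.lTensor A (HopfAlgebra.antipode (R := ℂ)) (w * (σ' c ⊗ₜ[ℂ] (1 : A))))
      = Gam φ (LinearMap.lTensor A (HopfAlgebra.antipode (R := ℂ)) ((c ⊗ₜ[ℂ] (1 : A)) * w)) := by
  induction w using TensorProduct.induction_on with
  | zero => simp
  | tmul u v =>
      simp only [Algebra.TensorProduct.tmul_mul_tmul, mul_one, one_mul,
        LinearMap.lTensor_tmul, Gam_tmul]
      rw [← hσ' c u]
  | add u v hu hv => simp only [mul_add, add_mul, map_add, hu, hv]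

lemma sig0
    (hσ' : ∀ a b : A, φ (antipode (R := ℂ) (a * b)) = φ (antipode (R := ℂ) (b * σ' a)))
    (x : A) (w : A ⊗[ℂ] A) :
    Gam φ ((x ⊗ₜ[ℂ] (1 : A)) * TensorProduct.map σ'.toLinearMap LinearMap.id w)
      = Gam φ (w * (x ⊗ₜ[ℂ] (1 : A))) := by
  induction w using TensorProduct.induction_on with
  | zero => simp
  | tmul u v =>
      simp only [TensorProduct.map_tmul, Algebra.TensorProduct.tmul_mul_tmul, mul_one, one_mul,
        LinearMap.id_coe, id_eq, AlgEquiv.toLinearMap_apply, Gam_tmul]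
      rw [hσ' u x]
  | add u v hu hv => simp only [mul_add, add_mul, map_add, hu, hv]

lemma bridge (f : A →ₗ[ℂ] ℂ) (x : A) (w : A ⊗[ℂ] A) :
    f (Gam φ ((x ⊗ₜ[ℂ] (1 : A)) * w))
      = φ (𝑺 (x * (TensorProduct.rid ℂ A (LinearMap.lTensor A f w)))) := by
  induction w using TensorProduct.induction_on with
  | zero => simp
  | tmul u v =>
      simp [Algebra.TensorProduct.tmul_mul_tmul, mul_smul_comm, mul_comm]
  | add u v hu hv => simp [mul_add, hu, hv]

lemma sep (X : A ⊗[ℂ] A)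
    (h : ∀ f : A →ₗ[ℂ] ℂ, TensorProduct.rid ℂ A (LinearMap.lTensor A f X) = 0) : X = 0 := by
  classical
  set bs := Module.Basis.ofVectorSpace ℂ A with hbs
  set e := TensorProduct.congr (LinearEquiv.refl ℂ A) bs.repr with he
  have h0 : TensorProduct.finsuppScalarRight ℂ ℂ A (Module.Basis.ofVectorSpaceIndex ℂ A) (e X) = 0 := by
    ext i
    rw [TensorProduct.finsuppScalarRight_apply]
    have hcomp : (LinearMap.lTensor A (Finsupp.lapply i)) ∘ₗ (e : _ →ₗ[ℂ] _)
        = LinearMap.lTensor A ((Finsupp.lapply i : (_ →₀ ℂ) →ₗ[ℂ] ℂ) ∘ₗ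
            (bs.repr : A →ₗ[ℂ] _)) := by
      apply TensorProduct.ext'
      intro u v
      simp [he]
    have h2 := LinearMap.congr_fun hcomp X
    simp only [LinearMap.comp_apply, LinearEquiv.coe_coe] at h2
    rw [h2, AlgebraTensorModule.rid_eq_rid, h _]
    simp
  have h1 :=
    (TensorProduct.finsuppScalarRight ℂ ℂ A (Module.Basis.ofVectorSpaceIndex ℂ A)).map_eq_zero_iff.mp h0
  exact e.map_eq_zero_iff.mp h1

end ModularAuxProof

open ModularAuxProof Coalgebra in
/-- The comultiplication of the modular automorphism of the right integral `ψ = φ ∘ S`: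
`Δ(σ'(a)) = (σ' ⊗ S⁻²)(Δ(a))` for all `a ∈ A`. -/
theorem comul_modular_automorphism_right
    {A : Type*} [Ring A] [HopfAlgebra ℂ A]
    (Sinv : A →ₗ[ℂ] A)
    (hSinv₁ : ∀ a : A, Sinv (antipode (R := ℂ) a) = a)
    (hSinv₂ : ∀ a : A, antipode (R := ℂ) (Sinv a) = a)
    (φ : A →ₗ[ℂ] ℂ) (hφ0 : φ ≠ 0)
    (hφL : ∀ a : A,
      (TensorProduct.rid ℂ A) (LinearMap.lTensor A φ (Coalgebra.comul a)) = φ a • (1 : A))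
    (hφf1 : ∀ a : A, (∀ b : A, φ (a * b) = 0) → a = 0)
    (hφf2 : ∀ a : A, (∀ b : A, φ (b * a) = 0) → a = 0)
    (hψR : ∀ a : A,
      (TensorProduct.lid ℂ A) (LinearMap.rTensor A (φ ∘ₗ antipode (R := ℂ))
        (Coalgebra.comul a)) = φ (antipode (R := ℂ) a) • (1 : A))
    (σ' : A ≃ₐ[ℂ] A)
    (hσ' : ∀ a b : A, φ (antipode (R := ℂ) (a * b)) = φ (antipode (R := ℂ) (b * σ' a))) :
    ∀ a : A,
      Coalgebra.comul (R := ℂ) (σ' a) =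
        TensorProduct.map σ'.toLinearMap (Sinv ∘ₗ Sinv) (Coalgebra.comul a) := by
  intro a
  set SS : A →ₗ[ℂ] A :=
    (HopfAlgebra.antipode (R := ℂ)) ∘ₗ (HopfAlgebra.antipode (R := ℂ)) with hSS
  set W : A ⊗[ℂ] A := LinearMap.lTensor A SS (Coalgebra.comul (R := ℂ) (σ' a))
      - TensorProduct.map σ'.toLinearMap LinearMap.id (Coalgebra.comul (R := ℂ) a) with hW
  have main : ∀ x : A, Gam φ ((x ⊗ₜ[ℂ] (1 : A)) * W) = 0 := by
    intro x
    rw [hW, mul_sub, map_sub]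
    have h1 : Gam φ ((x ⊗ₜ[ℂ] (1 : A)) * LinearMap.lTensor A SS
        (Coalgebra.comul (R := ℂ) (σ' a)))
        = Gam φ (Coalgebra.comul (R := ℂ) a * (x ⊗ₜ[ℂ] (1 : A))) := by
      rw [mul_lTensor, hSS, three φ hψR x (σ' a), sig1 φ σ' hσ' a (Coalgebra.comul (R := ℂ) x),
        two' φ hψR a x]
    have h2 : Gam φ ((x ⊗ₜ[ℂ] (1 : A)) *
        TensorProduct.map σ'.toLinearMap LinearMap.id (Coalgebra.comul (R := ℂ) a))
        = Gam φ (Coalgebra.comul (R := ℂ) a * (x ⊗ₜ[ℂ] (1 : A))) :=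
      sig0 φ σ' hσ' x _
    rw [h1, h2, sub_self]
  have hW0 : W = 0 := by
    apply sep
    intro f
    have hc : ∀ x : A, φ (antipode (R := ℂ)
        (x * (TensorProduct.rid ℂ A (LinearMap.lTensor A f W)))) = 0 := by
      intro x
      rw [← bridge, main x, map_zero]
    set c := TensorProduct.rid ℂ A (LinearMap.lTensor A f W) with hcdef
    have h' : ∀ y : A, φ (antipode (R := ℂ) c * y) = 0 := by
      intro y
      have h3 := hc (Sinv y)
      rw [antipodeMul (Sinv y) c, hSinv₂ y] at h3
      exact h3
    have h0 : antipode (R := ℂ) c = 0 := hφf1 _ h'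
    have h4 := congrArg Sinv h0
    rwa [hSinv₁, map_zero] at h4
  have hEq : LinearMap.lTensor A SS (Coalgebra.comul (R := ℂ) (σ' a))
      = TensorProduct.map σ'.toLinearMap LinearMap.id (Coalgebra.comul (R := ℂ) a) :=
    sub_eq_zero.mp hW0
  have h5 := congrArg (LinearMap.lTensor A (Sinv ∘ₗ Sinv)) hEq
  have hleft : LinearMap.lTensor A (Sinv ∘ₗ Sinv)
      (LinearMap.lTensor A SS (Coalgebra.comul (R := ℂ) (σ' a)))
      = Coalgebra.comul (R := ℂ) (σ' a) := by
    have hcomp : LinearMap.lTensor A (Sinv ∘ₗ Sinv) ∘ₗ LinearMap.lTensor A SS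
        = LinearMap.id (R := ℂ) (M := A ⊗[ℂ] A) := by
      apply TensorProduct.ext'
      intro u v
      simp [hSS, hSinv₁]
    exact LinearMap.congr_fun hcomp _
  have hright : LinearMap.lTensor A (Sinv ∘ₗ Sinv)
      (TensorProduct.map σ'.toLinearMap LinearMap.id (Coalgebra.comul (R := ℂ) a))
      = TensorProduct.map σ'.toLinearMap (Sinv ∘ₗ Sinv) (Coalgebra.comul (R := ℂ) a) := by
    have hcomp : LinearMap.lTensor A (Sinv ∘ₗ Sinv) ∘ₗ
        TensorProduct.map σ'.toLinearMap LinearMap.id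
        = TensorProduct.map σ'.toLinearMap (Sinv ∘ₗ Sinv) := by
      apply TensorProduct.ext'
      intro u v
      simp
    exact LinearMap.congr_fun hcomp _
  rw [hleft, hright] at h5
  exact h5
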